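/- Let N be a binomial random variable with M trials and success probability p, with Mp ≥ 1. Then for any t ∈ (0,1], E[N^t] ≤ (Mp)^t + Mp; in particular E[N^t] ≤ 2·max{(Mp)^t, Mp}. -/

import Mathlib

/-- For `N ~ Binomial(M, p)` with `M·p ≥ 1` and `t ∈ (0,1]`,
`E[N^t] ≤ (Mp)^t + Mp`, and in particular `E[N^t] ≤ 2·max{(Mp)^t, Mp}`. -/
theorem stmt4 (M : ℕ) (hM : 0 < M) (p : ℝ) (hp0 : 0 ≤ p) (hp1 : p ≤ 1)
    (hMp : 1 ≤ (M : ℝ) * p) (t : ℝ) (ht0 : 0 < t) (ht1 : t ≤ 1) :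
    (∑ k ∈ Finset.range (M + 1),
        (M.choose k : ℝ) * p ^ k * (1 - p) ^ (M - k) * (k : ℝ) ^ t)
      ≤ ((M : ℝ) * p) ^ t + (M : ℝ) * p ∧
    (∑ k ∈ Finset.range (M + 1),
        (M.choose k : ℝ) * p ^ k * (1 - p) ^ (M - k) * (k : ℝ) ^ t)
      ≤ 2 * max (((M : ℝ) * p) ^ t) ((M : ℝ) * p) := by
  have hq0 : (0:ℝ) ≤ 1 - p := by linarith
  -- the mean of the binomial is M*p
  obtain ⟨m, rfl⟩ : ∃ m, M = m + 1 := ⟨M - 1, (Nat.succ_pred_eq_of_pos hM).symm⟩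
  have hmean : (∑ k ∈ Finset.range (m + 1 + 1),
      ((m+1).choose k : ℝ) * p ^ k * (1 - p) ^ (m + 1 - k) * (k : ℝ))
      = ((m+1 : ℕ) : ℝ) * p := by
    rw [Finset.sum_range_succ']
    simp only [Nat.cast_zero, mul_zero, add_zero]
    have key : ∀ i : ℕ, (((m+1).choose (i+1) : ℝ)) * ((i : ℝ) + 1)
        = ((m+1 : ℕ) : ℝ) * (m.choose i : ℝ) := by
      intro i
      have h := Nat.add_one_mul_choose_eq m i
      have : ((Nat.succ m * m.choose i : ℕ) : ℝ)
          = (((m+1).choose (i+1) * (i+1) : ℕ) : ℝ) := by rw [h]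
      push_cast at this
      push_cast
      linarith
    have : ∀ i ∈ Finset.range (m+1),
        ((m+1).choose (i+1) : ℝ) * p ^ (i+1) * (1 - p) ^ (m + 1 - (i+1)) * (((i+1:ℕ)):ℝ)
        = ((m+1 : ℕ) : ℝ) * p * ((m.choose i : ℝ) * p ^ i * (1 - p) ^ (m - i)) := by
      intro i hi
      have h1 : m + 1 - (i+1) = m - i := by omega
      rw [h1]
      have k2 := key i
      push_cast at k2 ⊢
      linear_combination (p ^ (i+1) * (1-p)^(m-i)) * k2
    calc ∑ i ∈ Finset.range (m+1),
          ((m+1).choose (i+1) : ℝ) * p ^ (i+1) * (1 - p) ^ (m + 1 - (i+1)) * (((i+1:ℕ)):ℝ)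
        = ∑ i ∈ Finset.range (m+1),
          ((m+1 : ℕ) : ℝ) * p * ((m.choose i : ℝ) * p ^ i * (1 - p) ^ (m - i)) :=
          Finset.sum_congr rfl this
      _ = ((m+1 : ℕ) : ℝ) * p * ∑ i ∈ Finset.range (m+1),
          (m.choose i : ℝ) * p ^ i * (1 - p) ^ (m - i) := by rw [Finset.mul_sum]
      _ = ((m+1 : ℕ) : ℝ) * p := by
          have hb : (∑ i ∈ Finset.range (m+1),
              (m.choose i : ℝ) * p ^ i * (1 - p) ^ (m - i)) = (p + (1 - p)) ^ m := by
            rw [add_pow]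
            exact Finset.sum_congr rfl fun i _ => by ring
          norm_num at hb
          rw [hb, mul_one]
  -- pointwise bound k^t ≤ k
  have hsum : (∑ k ∈ Finset.range (m + 1 + 1),
        ((m+1).choose k : ℝ) * p ^ k * (1 - p) ^ (m + 1 - k) * (k : ℝ) ^ t)
      ≤ ((m+1 : ℕ) : ℝ) * p := by
    rw [← hmean]
    apply Finset.sum_le_sum
    intro k _
    have hcoef : (0:ℝ) ≤ ((m+1).choose k : ℝ) * p ^ k * (1 - p) ^ (m + 1 - k) := by
      positivity
    apply mul_le_mul_of_nonneg_left _ hcoef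
    rcases Nat.eq_zero_or_pos k with rfl | hk
    · simp [Real.zero_rpow (ne_of_gt ht0)]
    · have hk1 : (1:ℝ) ≤ (k:ℝ) := by exact_mod_cast hk
      calc (k:ℝ) ^ t ≤ (k:ℝ) ^ (1:ℝ) :=
            Real.rpow_le_rpow_of_exponent_le hk1 ht1
        _ = (k:ℝ) := Real.rpow_one _
  have hrpow : (0:ℝ) ≤ (((m+1 : ℕ) : ℝ) * p) ^ t :=
    Real.rpow_nonneg (by linarith) t
  constructor
  · linarith
  · have : ((m+1 : ℕ) : ℝ) * p ≤ max ((((m+1 : ℕ) : ℝ) * p) ^ t) (((m+1 : ℕ) : ℝ) * p) :=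
      le_max_right _ _
    nlinarith [le_max_left ((((m+1 : ℕ) : ℝ) * p) ^ t) (((m+1 : ℕ) : ℝ) * p), hrpow]
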